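/- Let (X, d) be a compact quasihypermetric space. If there exist a sequence μ_n of mass-1 signed measures and constants α, β ∈ ℝ with I(μ_n) → α and d_{μ_n} → β·1 uniformly on X, then M(X) ≤ 2β − α < ∞. -/

import Mathlib

open MeasureTheory

/-- Integral of a function against a finite signed Borel measure, via Jordan decomposition. -/
noncomputable def sInt {X : Type*} [MeasurableSpace X] (μ : SignedMeasure X) (f : X → ℝ) : ℝ :=
  (∫ x, f x ∂μ.toJordanDecomposition.posPart) - ∫ x, f x ∂μ.toJordanDecomposition.negPart

/-- Energy `I(μ, ν) = ∫∫ d(x,y) dμ(x) dν(y)` with respect to a kernel `d`. -/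
noncomputable def en {X : Type*} [MeasurableSpace X] (d : X → X → ℝ)
    (μ ν : SignedMeasure X) : ℝ :=
  sInt μ (fun x => sInt ν (fun y => d x y))

/-- The potential `d_μ(x) = ∫ d(x,y) dμ(y)`. -/
noncomputable def dPot {X : Type*} [MeasurableSpace X] (d : X → X → ℝ)
    (μ : SignedMeasure X) (x : X) : ℝ :=
  sInt μ (fun y => d x y)

/-- The set of energies `I(μ)` of signed Borel measures of total mass one. -/
noncomputable def MSet (X : Type*) [MetricSpace X] [MeasurableSpace X] : Set ℝ :=
  {r | ∃ μ : SignedMeasure X, μ Set.univ = (1 : ℝ) ∧ en (fun x y => dist x y) μ μ = r}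

section Aux

variable {X : Type*} [MetricSpace X] [CompactSpace X] [MeasurableSpace X] [BorelSpace X]

lemma contInt {f : X → ℝ} (hf : Continuous f) (m : Measure X) [IsFiniteMeasure m] :
    Integrable f m :=
  hf.integrable_of_hasCompactSupport (HasCompactSupport.of_compactSpace f)

lemma sInt_add (μ ν : SignedMeasure X) {f : X → ℝ} (hf : Continuous f) :
    sInt (μ + ν) f = sInt μ f + sInt ν f := by
  have grp : ∀ a b c d e g : VectorMeasure X ℝ,
      a - g = (d - b) + (e - c) → a + b + c = d + e + g := by
    intro a b c d e g h
    have h2 : a + b + c - (d + e + g) = a - g - ((d - b) + (e - c)) := by abel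
    rw [h, sub_self] at h2
    exact sub_eq_zero.mp h2
  have e1 := μ.toSignedMeasure_toJordanDecomposition
  have e2 := ν.toSignedMeasure_toJordanDecomposition
  have e3 := (μ + ν).toSignedMeasure_toJordanDecomposition
  rw [JordanDecomposition.toSignedMeasure] at e1 e2 e3
  have h : (μ + ν).toJordanDecomposition.posPart.toSignedMeasure
      - (μ + ν).toJordanDecomposition.negPart.toSignedMeasure
      = (μ.toJordanDecomposition.posPart.toSignedMeasure
          - μ.toJordanDecomposition.negPart.toSignedMeasure)
        + (ν.toJordanDecomposition.posPart.toSignedMeasure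
          - ν.toJordanDecomposition.negPart.toSignedMeasure) := by
    rw [e1, e2]; exact e3
  have key : (μ + ν).toJordanDecomposition.posPart + μ.toJordanDecomposition.negPart
      + ν.toJordanDecomposition.negPart
      = μ.toJordanDecomposition.posPart + ν.toJordanDecomposition.posPart
        + (μ + ν).toJordanDecomposition.negPart := by
    rw [← Measure.toSignedMeasure_eq_toSignedMeasure_iff,
      Measure.toSignedMeasure_add, Measure.toSignedMeasure_add,
      Measure.toSignedMeasure_add, Measure.toSignedMeasure_add]
    exact grp _ _ _ _ _ _ h
  have hint : ∫ x, f x ∂((μ + ν).toJordanDecomposition.posPart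
      + μ.toJordanDecomposition.negPart + ν.toJordanDecomposition.negPart)
      = ∫ x, f x ∂(μ.toJordanDecomposition.posPart + ν.toJordanDecomposition.posPart
        + (μ + ν).toJordanDecomposition.negPart) := by rw [key]
  rw [integral_add_measure ((contInt hf _).add_measure (contInt hf _)) (contInt hf _),
    integral_add_measure (contInt hf _) (contInt hf _),
    integral_add_measure ((contInt hf _).add_measure (contInt hf _)) (contInt hf _),
    integral_add_measure (contInt hf _) (contInt hf _)] at hint
  simp only [sInt]
  linarith

lemma sInt_sub (μ ν : SignedMeasure X) {f : X → ℝ} (hf : Continuous f) :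
    sInt (μ - ν) f = sInt μ f - sInt ν f := by
  have h := sInt_add (μ - ν) ν hf
  rw [sub_add_cancel] at h
  linarith

lemma sInt_sub_fun (μ : SignedMeasure X) {f g : X → ℝ} (hf : Continuous f) (hg : Continuous g) :
    sInt μ (fun x => f x - g x) = sInt μ f - sInt μ g := by
  simp only [sInt]
  rw [integral_sub (contInt hf _) (contInt hg _), integral_sub (contInt hf _) (contInt hg _)]
  ring

lemma signed_univ (μ : SignedMeasure X) :
    μ Set.univ = (μ.toJordanDecomposition.posPart Set.univ).toReal
      - (μ.toJordanDecomposition.negPart Set.univ).toReal := by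
  conv_lhs => rw [← μ.toSignedMeasure_toJordanDecomposition]
  rw [JordanDecomposition.toSignedMeasure, VectorMeasure.sub_apply,
    Measure.toSignedMeasure_apply_measurable MeasurableSet.univ,
    Measure.toSignedMeasure_apply_measurable MeasurableSet.univ]
  rfl

lemma sInt_const (μ : SignedMeasure X) (c : ℝ) : sInt μ (fun _ => c) = c * μ Set.univ := by
  simp only [sInt, integral_const, smul_eq_mul, signed_univ μ, Measure.real]
  ring

lemma dist_bdd : ∀ x y : X, dist x y ≤ Metric.diam (Set.univ : Set X) := fun x y =>
  Metric.dist_le_diam_of_mem (isCompact_univ.isBounded) trivial trivial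

lemma cont_pot (m : Measure X) [IsFiniteMeasure m] :
    Continuous fun x : X => ∫ y, dist x y ∂m := by
  apply continuous_of_dominated (bound := fun _ => Metric.diam (Set.univ : Set X))
  · exact fun x => (Continuous.dist continuous_const continuous_id).aestronglyMeasurable
  · intro x
    filter_upwards with y
    rw [Real.norm_eq_abs, abs_of_nonneg dist_nonneg]
    exact dist_bdd x y
  · exact integrable_const _
  · filter_upwards with y
    exact Continuous.dist continuous_id continuous_const

lemma cont_dPot (μ : SignedMeasure X) : Continuous (dPot (fun x y => dist x y) μ) := by
  have : dPot (fun x y => dist x y) μ = fun x =>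
      (∫ y, dist x y ∂μ.toJordanDecomposition.posPart)
        - ∫ y, dist x y ∂μ.toJordanDecomposition.negPart := rfl
  rw [this]
  exact (cont_pot _).sub (cont_pot _)

lemma swap_int (a b : Measure X) [IsFiniteMeasure a] [IsFiniteMeasure b] :
    ∫ x, (∫ y, dist x y ∂b) ∂a = ∫ x, (∫ y, dist x y ∂a) ∂b := by
  have h : Integrable (Function.uncurry fun x y : X => dist x y) (a.prod b) := by
    apply Continuous.integrable_of_hasCompactSupport continuous_dist
    exact HasCompactSupport.of_compactSpace _
  rw [integral_integral_swap h]
  apply integral_congr_ae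
  filter_upwards with u
  apply integral_congr_ae
  filter_upwards with v
  exact dist_comm v u

lemma en_eq (μ ν : SignedMeasure X) :
    en (fun x y => dist x y) μ ν =
      (∫ x, (∫ y, dist x y ∂ν.toJordanDecomposition.posPart) ∂μ.toJordanDecomposition.posPart)
      - (∫ x, (∫ y, dist x y ∂ν.toJordanDecomposition.negPart) ∂μ.toJordanDecomposition.posPart)
      - (∫ x, (∫ y, dist x y ∂ν.toJordanDecomposition.posPart) ∂μ.toJordanDecomposition.negPart)
      + (∫ x, (∫ y, dist x y ∂ν.toJordanDecomposition.negPart) ∂μ.toJordanDecomposition.negPart)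
      := by
  simp only [en, sInt]
  rw [integral_sub (contInt (cont_pot _) _) (contInt (cont_pot _) _),
    integral_sub (contInt (cont_pot _) _) (contInt (cont_pot _) _)]
  ring

lemma en_symm (μ ν : SignedMeasure X) :
    en (fun x y => dist x y) μ ν = en (fun x y => dist x y) ν μ := by
  rw [en_eq μ ν, en_eq ν μ,
    swap_int μ.toJordanDecomposition.posPart ν.toJordanDecomposition.posPart,
    swap_int μ.toJordanDecomposition.posPart ν.toJordanDecomposition.negPart,
    swap_int μ.toJordanDecomposition.negPart ν.toJordanDecomposition.posPart,
    swap_int μ.toJordanDecomposition.negPart ν.toJordanDecomposition.negPart]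
  ring

lemma abs_sInt_le (μ : SignedMeasure X) {f : X → ℝ} (hf : Continuous f) {C : ℝ}
    (hC : ∀ x, |f x| ≤ C) :
    |sInt μ f| ≤ C * ((μ.toJordanDecomposition.posPart Set.univ).toReal
      + (μ.toJordanDecomposition.negPart Set.univ).toReal) := by
  have h1 : ‖∫ x, f x ∂μ.toJordanDecomposition.posPart‖ ≤
      C * (μ.toJordanDecomposition.posPart Set.univ).toReal :=
    norm_integral_le_of_norm_le_const (Filter.Eventually.of_forall fun x => hC x)
  have h2 : ‖∫ x, f x ∂μ.toJordanDecomposition.negPart‖ ≤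
      C * (μ.toJordanDecomposition.negPart Set.univ).toReal :=
    norm_integral_le_of_norm_le_const (Filter.Eventually.of_forall fun x => hC x)
  rw [Real.norm_eq_abs] at h1 h2
  simp only [sInt]
  calc |_ - _| ≤ |∫ x, f x ∂μ.toJordanDecomposition.posPart|
      + |∫ x, f x ∂μ.toJordanDecomposition.negPart| := abs_sub _ _
    _ ≤ _ := by linarith [h1, h2]; 

end Aux

/-- If `μ_n` is a sequence of mass-one signed measures with `I(μ_n) → α` and
`d_{μ_n} → β·1` uniformly on `X`, then `M(X) ≤ 2β - α < ∞`, i.e. every mass-one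
signed measure has energy at most `2β - α`. -/
theorem stmt11 {X : Type*} [MetricSpace X] [CompactSpace X] [MeasurableSpace X] [BorelSpace X]
    (hq : ∀ ν : SignedMeasure X, ν Set.univ = (0 : ℝ) → en (fun x y => dist x y) ν ν ≤ 0)
    (μ : ℕ → SignedMeasure X) (hμ : ∀ n, (μ n) Set.univ = (1 : ℝ)) (α β : ℝ)
    (hI : Filter.Tendsto (fun n => en (fun x y => dist x y) (μ n) (μ n))
      Filter.atTop (nhds α))
    (hd : TendstoUniformly (fun n x => dPot (fun x y => dist x y) (μ n) x)
      (fun _ => β) Filter.atTop) :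
    ∀ ν : SignedMeasure X, ν Set.univ = (1 : ℝ) →
      en (fun x y => dist x y) ν ν ≤ 2 * β - α := by
  intro ν hν
  set D : X → X → ℝ := fun x y => dist x y with hD
  -- Step 1: the key inequality for each n.
  have key : ∀ n, en D ν ν ≤ 2 * sInt ν (dPot D (μ n)) - en D (μ n) (μ n) := by
    intro n
    have h0 : (ν - μ n) Set.univ = (0 : ℝ) := by
      rw [VectorMeasure.sub_apply, hν, hμ n]; ring
    have hq' := hq _ h0
    have hinner : (fun x => sInt (ν - μ n) (fun y => D x y)) =
        fun x => dPot D ν x - dPot D (μ n) x := by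
      funext x
      exact sInt_sub ν (μ n) (Continuous.dist continuous_const continuous_id)
    have hexp : en D (ν - μ n) (ν - μ n) =
        en D ν ν - sInt ν (dPot D (μ n)) - (sInt (μ n) (dPot D ν) - en D (μ n) (μ n)) := by
      calc en D (ν - μ n) (ν - μ n)
          = sInt (ν - μ n) (fun x => dPot D ν x - dPot D (μ n) x) := by
            rw [en, hinner]
        _ = sInt ν (fun x => dPot D ν x - dPot D (μ n) x)
            - sInt (μ n) (fun x => dPot D ν x - dPot D (μ n) x) :=
            sInt_sub _ _ ((cont_dPot ν).sub (cont_dPot (μ n)))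
        _ = (sInt ν (dPot D ν) - sInt ν (dPot D (μ n)))
            - (sInt (μ n) (dPot D ν) - sInt (μ n) (dPot D (μ n))) := by
            rw [sInt_sub_fun ν (cont_dPot ν) (cont_dPot (μ n)),
              sInt_sub_fun (μ n) (cont_dPot ν) (cont_dPot (μ n))]
        _ = _ := rfl
    have hsymm : sInt (μ n) (dPot D ν) = sInt ν (dPot D (μ n)) := en_symm (μ n) ν
    rw [hexp, hsymm] at hq'
    linarith
  -- Step 2: convergence of the right-hand side.
  have hpot : Filter.Tendsto (fun n => sInt ν (dPot D (μ n))) Filter.atTop (nhds β) := by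
    set T : ℝ := (ν.toJordanDecomposition.posPart Set.univ).toReal
      + (ν.toJordanDecomposition.negPart Set.univ).toReal with hT
    have hT0 : 0 ≤ T := by positivity
    rw [Metric.tendsto_atTop]
    intro ε hε
    have hε' : (0 : ℝ) < ε / (T + 1) := by positivity
    rw [Metric.tendstoUniformly_iff] at hd
    obtain ⟨N, hN⟩ := (Filter.eventually_atTop.mp (hd (ε / (T + 1)) hε'))
    refine ⟨N, fun n hn => ?_⟩
    have hb : ∀ x, |dPot D (μ n) x - β| ≤ ε / (T + 1) := by
      intro x
      have := hN n hn x
      rw [Real.dist_eq, abs_sub_comm] at this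
      exact le_of_lt this
    have hc : sInt ν (fun x => dPot D (μ n) x - β) =
        sInt ν (dPot D (μ n)) - β := by
      rw [sInt_sub_fun ν (cont_dPot (μ n)) continuous_const, sInt_const, hν, mul_one]
    have habs := abs_sInt_le ν (f := fun x => dPot D (μ n) x - β) ((cont_dPot (μ n)).sub continuous_const) hb
    rw [hc] at habs
    rw [Real.dist_eq]
    calc |sInt ν (dPot D (μ n)) - β| ≤ ε / (T + 1) * T := habs
      _ < ε := by
        rw [div_mul_eq_mul_div, div_lt_iff₀ (by linarith)]
        nlinarith
  have hlim : Filter.Tendsto (fun n => 2 * sInt ν (dPot D (μ n)) - en D (μ n) (μ n))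
      Filter.atTop (nhds (2 * β - α)) := (hpot.const_mul 2).sub hI
  exact ge_of_tendsto' hlim key
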